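/- For every n ≥ 4, the code B_n of Construction 2 is a cyclic 2-skew-tolerant binary Gray code of length n and size 2^n − 2, and the only two vectors of (Z/2)^n missing from B_n are e_{n−2} and e_{n−2}+e_n. -/

import Mathlib

/-- Codewords `c` and `d` differ exactly at coordinate `i` (1-based), by `±1` there. -/
def TransAt {m : ℕ} (c d : List (ZMod m)) (i : ℕ) : Prop :=
  1 ≤ i ∧ i ≤ c.length ∧ c.length = d.length ∧
  c.take (i-1) = d.take (i-1) ∧ c.drop i = d.drop i ∧
  (d.getD (i-1) 0 = c.getD (i-1) 0 + 1 ∨ d.getD (i-1) 0 = c.getD (i-1) 0 - 1)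

/-- `C` is a cyclic Gray code with transition sequence `δ`. -/
def CyclicGrayWith {m : ℕ} (C : List (List (ZMod m))) (δ : ℕ → ℕ) : Prop :=
  C.Nodup ∧ ∀ i < C.length,
    TransAt (C.getD i []) (C.getD ((i+1) % C.length) []) (δ i)

/-- `C` is a non-cyclic (path) Gray code with transition sequence `δ`. -/
def PathGrayWith {m : ℕ} (C : List (List (ZMod m))) (δ : ℕ → ℕ) : Prop :=
  C.Nodup ∧ ∀ i, i + 1 < C.length →
    TransAt (C.getD i []) (C.getD (i+1) []) (δ i)

/-- cyclic `k`-skew-tolerance. -/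
def SkewCyc (P : ℕ) (δ : ℕ → ℕ) (k : ℤ) : Prop :=
  ∀ i < P, |(δ i : ℤ) - (δ ((i+1) % P) : ℤ)| ≤ k

/-- non-cyclic `k`-skew-tolerance. -/
def SkewPath (P : ℕ) (δ : ℕ → ℕ) (k : ℤ) : Prop :=
  ∀ i, i + 2 < P → |(δ i : ℤ) - (δ (i+1) : ℤ)| ≤ k

/-- the `i`-th standard unit vector (1-based) of length `len` over `ZMod 2`. -/
def unit (len i : ℕ) : List (ZMod 2) :=
  (List.range len).map (fun j => if j + 1 = i then 1 else 0)

/-- pointwise sum of two vectors. -/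
def vadd {m : ℕ} (c d : List (ZMod m)) : List (ZMod m) :=
  List.zipWith (· + ·) c d

/-- `B_{n+1}` from `A_n`: the all-zero word, then `A_n` with `1` appended,
then the reversal of `A_n` minus its first word, with `0` appended. -/
def buildB (An : List (List (ZMod 2))) (len : ℕ) : List (List (ZMod 2)) :=
  List.replicate len (0 : ZMod 2) ::
    (An.map (· ++ [1]) ++ An.tail.reverse.map (· ++ [0]))

/-- Construction 2, codes `A_n` (`n ≥ 3`). -/
def c2A : ℕ → List (List (ZMod 2))
  | 0 => [] | 1 => [] | 2 => []
  | 3 => [[0,0,0],[0,0,1],[0,1,1],[1,1,1],[1,1,0],[1,0,0],[1,0,1]]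
  | (n+4) => (buildB (c2A (n+3)) (n+4)).dropLast ++
      [unit (n+4) (n+2), vadd (unit (n+4) (n+2)) (unit (n+4) (n+4))]

/-- Construction 2, codes `B_n` (`n ≥ 4`). -/
def c2B (n : ℕ) : List (List (ZMod 2)) := buildB (c2A (n-1)) n

/-- Construction 2, codes `C_n` (`n ≥ 4`). -/
def c2C (n : ℕ) : List (List (ZMod 2)) :=
  List.replicate n (0 : ZMod 2) :: unit n (n-2) ::
    vadd (unit n (n-2)) (unit n n) :: (c2B n).tail

/- ======================= auxiliary development ======================= -/

def Z (n : ℕ) : List (ZMod 2) := List.replicate n 0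

lemma Z_append (a b : ℕ) : Z (a+b) = Z a ++ Z b := by
  unfold Z; rw [List.replicate_add]

lemma Z_succ' (a : ℕ) : Z (a+1) = Z a ++ [0] := Z_append a 1

lemma Z_length (a : ℕ) : (Z a).length = a := by simp [Z]

lemma zmod2_cases (b : ZMod 2) : b = 0 ∨ b = 1 := by revert b; decide

lemma getD_append_mid (p s : List (ZMod 2)) (a : ZMod 2) :
    (p ++ a :: s).getD p.length 0 = a := by
  rw [List.getD_eq_getElem _ _ (by simp)]
  rw [List.getElem_append_right (le_refl _)]
  simp

lemma transAt_mid (p s : List (ZMod 2)) (a : ZMod 2) :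
    TransAt (p ++ a :: s) (p ++ (a+1) :: s) (p.length + 1) := by
  refine ⟨by omega, by simp [Nat.le_add_right], by simp, ?_, ?_, ?_⟩
  · simp
  · rw [List.drop_append, List.drop_append]
    simp
  · left
    simp only [Nat.add_sub_cancel, getD_append_mid]

lemma TransAt.symm {m : ℕ} {c d : List (ZMod m)} {i : ℕ} (h : TransAt c d i) :
    TransAt d c i := by
  obtain ⟨h1, h2, h3, h4, h5, h6⟩ := h
  refine ⟨h1, h3 ▸ h2, h3.symm, h4.symm, h5.symm, ?_⟩
  rcases h6 with h | h
  · right; rw [h]; ring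
  · left; rw [h]; ring

lemma TransAt.append_right {c d : List (ZMod 2)} {i : ℕ} (x : ZMod 2)
    (h : TransAt c d i) : TransAt (c ++ [x]) (d ++ [x]) i := by
  obtain ⟨h1, h2, h3, h4, h5, h6⟩ := h
  refine ⟨h1, by simp; omega, by simp [h3], ?_, ?_, ?_⟩
  · rw [List.take_append, List.take_append, h4, h3]
  · rw [List.drop_append, List.drop_append, h5, h3]
  · have hc : (c ++ [x]).getD (i-1) 0 = c.getD (i-1) 0 := by
      rw [List.getD_eq_getElem _ _ (by simp; omega), List.getD_eq_getElem _ _ (by omega),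
        List.getElem_append_left (by omega)]
    have hd : (d ++ [x]).getD (i-1) 0 = d.getD (i-1) 0 := by
      rw [List.getD_eq_getElem _ _ (by simp; omega), List.getD_eq_getElem _ _ (by omega),
        List.getElem_append_left (by omega)]
    rw [hc, hd]; exact h6

def GC : List (List (ZMod 2)) → List ℕ → Prop
  | [], [] => True
  | [_], [] => True
  | c :: d :: C, t :: T => TransAt c d t ∧ GC (d :: C) T
  | _, _ => False

lemma gc_length : ∀ {C : List (List (ZMod 2))} {T : List ℕ}, GC C T → C ≠ [] →
    C.length = T.length + 1
  | [], _, h, hne => absurd rfl hne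
  | [c], [], h, _ => rfl
  | [c], t :: T, h, _ => absurd h (by simp [GC])
  | c :: d :: C, [], h, _ => absurd h (by simp [GC])
  | c :: d :: C, t :: T, h, _ => by
      have := gc_length h.2 (by simp)
      simpa using this

lemma gc_glue : ∀ {C : List (List (ZMod 2))} {T : List ℕ}
    {D : List (List (ZMod 2))} {S : List ℕ} {t : ℕ},
    GC C T → GC D S → C ≠ [] → D ≠ [] →
    TransAt (C.getLastD []) (D.headD []) t → GC (C ++ D) (T ++ t :: S)
  | [], _, _, _, _, _, _, hC, _, _ => absurd rfl hC
  | [c], [], d :: D, S, t, _, hD, _, _, htr => by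
      exact ⟨by simpa using htr, hD⟩
  | [c], t' :: T, _, _, _, h, _, _, _, _ => absurd h (by simp [GC])
  | c :: c' :: C, [], _, _, _, h, _, _, _, _ => absurd h (by simp [GC])
  | c :: c' :: C, t' :: T, d :: D, S, t, h, hD, _, _, htr => by
      refine ⟨h.1, ?_⟩
      have := gc_glue h.2 hD (by simp) (by simp) (by simpa using htr)
      simpa using this

lemma gc_tail : ∀ {C : List (List (ZMod 2))} {T : List ℕ},
    GC C T → GC C.tail T.tail
  | [], [], _ => trivial
  | [c], [], _ => trivial
  | [c], t :: T, h => absurd h (by simp [GC])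
  | c :: d :: C, [], h => absurd h (by simp [GC])
  | c :: d :: C, t :: T, h => by simpa using h.2

lemma gc_reverse : ∀ {C : List (List (ZMod 2))} {T : List ℕ},
    GC C T → GC C.reverse T.reverse
  | [], [], _ => trivial
  | [c], [], _ => trivial
  | [c], t :: T, h => absurd h (by simp [GC])
  | c :: d :: C, [], h => absurd h (by simp [GC])
  | c :: d :: C, t :: T, h => by
      have ih := gc_reverse h.2
      have : GC ((d :: C).reverse ++ [c]) (T.reverse ++ t :: []) := by
        apply gc_glue ih ?_ (by simp) (by simp) ?_
        · trivial
        · simp only [List.getLastD_eq_getLast?, List.getLast?_reverse]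
          simpa using h.1.symm
      simpa using this

lemma gc_map_append (x : ZMod 2) : ∀ {C : List (List (ZMod 2))} {T : List ℕ},
    GC C T → GC (C.map (· ++ [x])) T
  | [], [], _ => trivial
  | [c], [], _ => trivial
  | [c], t :: T, h => absurd h (by simp [GC])
  | c :: d :: C, [], h => absurd h (by simp [GC])
  | c :: d :: C, t :: T, h => ⟨h.1.append_right x, gc_map_append x h.2⟩

lemma gc_dropLast : ∀ {C : List (List (ZMod 2))} {T : List ℕ},
    GC C T → GC C.dropLast T.dropLast
  | [], [], _ => trivial
  | [c], [], _ => trivial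
  | [c], t :: T, h => absurd h (by simp [GC])
  | c :: d :: C, [], h => absurd h (by simp [GC])
  | c :: d :: [], t :: T, h => by
      have : T = [] := by
        cases T with
        | nil => rfl
        | cons a b => exact absurd h.2 (by simp [GC])
      subst this
      trivial
  | c :: d :: e :: C, t :: T, h => by
      obtain ⟨t', T', rfl⟩ : ∃ t' T', T = t' :: T' := by
        cases T with
        | nil => exact absurd h.2 (by simp [GC])
        | cons a b => exact ⟨a, b, rfl⟩
      exact ⟨h.1, gc_dropLast h.2⟩

lemma gc_getD : ∀ {C : List (List (ZMod 2))} {T : List ℕ},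
    GC C T → ∀ i, i + 1 < C.length →
      TransAt (C.getD i []) (C.getD (i+1) []) (T.getD i 0)
  | [], [], _, i, hi => by simp at hi
  | [c], [], _, i, hi => by simp at hi
  | [c], t :: T, h, _, _ => absurd h (by simp [GC])
  | c :: d :: C, [], h, _, _ => absurd h (by simp [GC])
  | c :: d :: C, t :: T, h, 0, hi => by simpa using h.1
  | c :: d :: C, t :: T, h, (i+1), hi => by
      have := gc_getD h.2 i (by simpa using hi)
      simpa using this

def R (a b : ℕ) : Prop := a ≤ b + 2 ∧ b ≤ a + 2

lemma getD_eq_getLastD {α : Type*} [Inhabited α] (C : List α) (hC : C ≠ []) (d : α) :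
    C.getD (C.length - 1) d = C.getLastD d := by
  have hpos : 0 < C.length := List.length_pos_iff.2 hC
  rw [List.getD_eq_getElem _ _ (Nat.sub_lt hpos one_pos)]
  rw [List.getLastD_eq_getLast?, List.getLast?_eq_getElem?]
  rw [List.getElem?_eq_getElem (Nat.sub_lt hpos one_pos)]
  simp

lemma toCyclic {C : List (List (ZMod 2))} {T : List ℕ} {t : ℕ}
    (hgc : GC C T) (hnd : C.Nodup) (hC : C ≠ [])
    (hwrap : TransAt (C.getLastD []) (C.headD []) t) :
    CyclicGrayWith C (fun i => (T ++ [t]).getD i 0) := by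
  refine ⟨hnd, fun i hi => ?_⟩
  have hlen := gc_length hgc hC
  by_cases h : i + 1 < C.length
  · rw [Nat.mod_eq_of_lt h]
    have := gc_getD hgc i h
    have hT : (T ++ [t]).getD i 0 = T.getD i 0 := by
      rw [List.getD_eq_getElem _ _ (by simp; omega), List.getD_eq_getElem _ _ (by omega),
        List.getElem_append_left (by omega)]
    show TransAt _ _ ((T ++ [t]).getD i 0)
    rw [hT]; exact this
  · have hieq : i = C.length - 1 := by omega
    have hmod : (i + 1) % C.length = 0 := by
      have : i + 1 = C.length := by omega
      simp [this]
    rw [hmod]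
    have h1 : C.getD i [] = C.getLastD [] := by rw [hieq]; exact getD_eq_getLastD C hC []
    have h2 : C.getD 0 [] = C.headD [] := by cases C <;> simp_all
    have h3 : (T ++ [t]).getD i 0 = t := by
      have : i = T.length := by omega
      rw [this]
      rw [List.getD_eq_getElem _ _ (by simp)]
      simp
    show TransAt _ _ ((T ++ [t]).getD i 0)
    rw [h1, h2, h3]; exact hwrap

lemma chain'_getD {U : List ℕ} (h : List.Chain' R U) {i : ℕ} (hi : i + 1 < U.length) :
    R (U.getD i 0) (U.getD (i+1) 0) := by
  rw [List.getD_eq_getElem _ _ (by omega), List.getD_eq_getElem _ _ hi]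
  exact List.isChain_iff_getElem.1 h i (by omega)

lemma toSkewCyc {U : List ℕ} (h : List.Chain' R U) (hU : U ≠ [])
    (hwrap : R (U.getLastD 0) (U.headD 0)) (P : ℕ) (hP : P = U.length) :
    SkewCyc P (fun i => U.getD i 0) 2 := by
  intro i hi
  subst hP
  have key : ∀ a b : ℕ, R a b → |(a:ℤ) - b| ≤ 2 := by
    intro a b hab
    obtain ⟨h1, h2⟩ := hab
    rw [abs_le]; omega
  by_cases hlt : i + 1 < U.length
  · rw [Nat.mod_eq_of_lt hlt]
    exact key _ _ (chain'_getD h hlt)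
  · have h1 : (i + 1) % U.length = 0 := by
      have : i + 1 = U.length := by omega
      simp [this]
    rw [h1]
    have hpos : 0 < U.length := by omega
    have h2 : U.getD i 0 = U.getLastD 0 := by
      have hieq : i = U.length - 1 := by omega
      rw [hieq, List.getD_eq_getElem _ _ (Nat.sub_lt hpos one_pos)]
      rw [List.getLastD_eq_getLast?, List.getLast?_eq_getElem?,
        List.getElem?_eq_getElem (Nat.sub_lt hpos one_pos)]
      simp
    have h3 : U.getD 0 0 = U.headD 0 := by
      cases U with
      | nil => simp at hpos
      | cons a l => simp
    show |((U.getD i 0 : ℕ) : ℤ) - ((U.getD 0 0 : ℕ) : ℤ)| ≤ 2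
    rw [h2, h3]
    exact key _ _ hwrap

/- ================== transition sequences ================== -/

def dA : ℕ → List ℕ
  | 0 => [] | 1 => [] | 2 => []
  | 3 => [3,2,1,3,2,3]
  | (n+4) => ((n+4) :: dA (n+3) ++ (n+4) :: (dA (n+3)).tail.reverse).dropLast
      ++ [n+3, n+4]

def dB (n : ℕ) : List ℕ := n :: dA (n-1) ++ n :: (dA (n-1)).tail.reverse

/- ================== helper list lemmas ================== -/

lemma getLastD_concat {α : Type*} (l : List α) (a d : α) :
    (l ++ [a]).getLastD d = a := by
  simp [List.getLastD_eq_getLast?, List.getLast?_concat]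

lemma getLastD_append {α : Type*} (l1 l2 : List α) (d : α) (h : l2 ≠ []) :
    (l1 ++ l2).getLastD d = l2.getLastD d := by
  simp [List.getLastD_eq_getLast?, List.getLast?_append_of_ne_nil _ h]

lemma mem_concat_nodup {α : Type*} {P : List α} {b : α} (h : (P ++ [b]).Nodup) (x : α) :
    x ∈ P ↔ x ∈ P ++ [b] ∧ x ≠ b := by
  constructor
  · intro hx
    refine ⟨List.mem_append_left _ hx, ?_⟩
    rintro rfl
    rw [List.nodup_append] at h
    exact h.2.2 x hx x (by simp) rfl
  · rintro ⟨hx, hne⟩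
    rcases List.mem_append.1 hx with h1 | h1
    · exact h1
    · simp at h1; exact absurd h1 hne

lemma unit_succ (n i : ℕ) : unit (n+1) i = unit n i ++ [if n + 1 = i then 1 else 0] := by
  simp [unit, List.range_succ]

lemma unit_hi : ∀ n, ∀ {i}, n < i → unit n i = Z n
  | 0, i, _ => rfl
  | (n+1), i, h => by
      rw [unit_succ, unit_hi n (by omega), if_neg (by omega), Z_succ']

lemma unit_eq : ∀ n, ∀ {i}, 1 ≤ i → i ≤ n → unit n i = Z (i-1) ++ 1 :: Z (n-i)
  | 0, i, h1, h2 => by omega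
  | (n+1), i, h1, h2 => by
      rcases Nat.lt_or_ge i (n+1) with h | h
      · rw [unit_succ, unit_eq n h1 (by omega), if_neg (by omega)]
        have : n + 1 - i = (n - i) + 1 := by omega
        rw [this, Z_succ']
        simp
      · have : i = n + 1 := by omega
        subst this
        rw [unit_succ, unit_hi n (by omega), if_pos rfl]
        have : n + 1 - (n+1) = 0 := by omega
        rw [this]
        simp [Nat.add_sub_cancel, Z]

lemma vadd_Z (k : ℕ) : vadd (Z k) (Z k) = Z k := by
  simp [vadd, Z, List.zipWith_replicate]

lemma unit_sub2 (k : ℕ) : unit (k+4) (k+2) = Z (k+1) ++ [1,0,0] := by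
  rw [unit_eq _ (by omega) (by omega)]
  have h1 : k + 2 - 1 = k + 1 := by omega
  have h2 : k + 4 - (k+2) = 2 := by omega
  rw [h1, h2]
  rfl

lemma unit_last (k : ℕ) : unit (k+4) (k+4) = Z (k+1) ++ [0,0,1] := by
  rw [unit_eq _ (by omega) (le_refl _)]
  have h1 : k + 4 - 1 = k + 3 := by omega
  have h2 : k + 4 - (k+4) = 0 := by omega
  rw [h1, h2]
  have h3 : Z (k+3) = Z (k+1) ++ [0,0] := by
    have := Z_append (k+1) 2
    simpa [Z] using this
  rw [h3]
  simp [Z]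

lemma vadd_units (k : ℕ) :
    vadd (unit (k+4) (k+2)) (unit (k+4) (k+4)) = Z (k+1) ++ [1,0,1] := by
  rw [unit_sub2, unit_last]
  unfold vadd
  rw [List.zipWith_append (by simp)]
  have : List.zipWith (· + ·) (Z (k+1)) (Z (k+1)) = Z (k+1) := vadd_Z k.succ
  rw [this]
  have : List.zipWith (· + ·) [(1:ZMod 2),0,0] [(0:ZMod 2),0,1] = [1,0,1] := by decide
  rw [this]

/- ================== the invariants ================== -/

structure CIv (k : ℕ) : Prop where
  len_mem : ∀ c ∈ c2A (k+3), c.length = k+3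
  len : (c2A (k+3)).length = 2^(k+3) - 1
  dlen : (dA (k+3)).length = 2^(k+3) - 2
  shapeA : ∃ core, c2A (k+3) = Z (k+3) :: (Z (k+2) ++ [1]) :: (Z (k+1) ++ [1,1]) ::
      core ++ [Z k ++ [1,0,0], Z k ++ [1,0,1]]
  mem : ∀ x : List (ZMod 2), x ∈ c2A (k+3) ↔ x.length = k+3 ∧ x ≠ Z (k+1) ++ [1,0]
  nodup : (c2A (k+3)).Nodup
  gc : GC (c2A (k+3)) (dA (k+3))
  chain : List.Chain' R (dA (k+3))
  shapeD : ∃ mid, dA (k+3) = (k+3) :: (k+2) :: (k+1) :: mid ++ [k+2, k+3]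

structure CBf (k : ℕ) : Prop where
  len_mem : ∀ c ∈ c2B (k+4), c.length = k+4
  len : (c2B (k+4)).length = 2^(k+4) - 2
  dlen : (dB (k+4)).length = 2^(k+4) - 3
  mem : ∀ x : List (ZMod 2), x ∈ c2B (k+4) ↔
      x.length = k+4 ∧ x ≠ Z (k+1) ++ [1,0,0] ∧ x ≠ Z (k+1) ++ [1,0,1]
  nodup : (c2B (k+4)).Nodup
  gc : GC (c2B (k+4)) (dB (k+4))
  chain : List.Chain' R (dB (k+4))
  wrapT : TransAt ((c2B (k+4)).getLastD []) ((c2B (k+4)).headD []) (k+3)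
  shapeB : ∃ V, c2B (k+4) = Z (k+4) :: (Z (k+3) ++ [1]) :: (Z (k+2) ++ [1,1]) ::
      V ++ [Z (k+1) ++ [1,1,0], Z (k+2) ++ [1,0]]
  shapeDB : ∃ W, dB (k+4) = (k+4) :: (k+3) :: (k+2) :: W ++ [k+1, k+2]

instance {m : ℕ} (c d : List (ZMod m)) (i : ℕ) : Decidable (TransAt c d i) :=
  inferInstanceAs (Decidable (_ ∧ _ ∧ _ ∧ _ ∧ _ ∧ (_ ∨ _)))

instance instDecGC : ∀ (C : List (List (ZMod 2))) (T : List ℕ), Decidable (GC C T)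
  | [], [] => isTrue trivial
  | [_], [] => isTrue trivial
  | c :: d :: C, t :: T =>
      have : Decidable (GC (d :: C) T) := instDecGC (d :: C) T
      decidable_of_iff (TransAt c d t ∧ GC (d :: C) T) (by simp [GC])
  | [], t :: T => isFalse (by simp [GC])
  | [_], t :: T => isFalse (by simp [GC])
  | c :: d :: C, [] => isFalse (by simp [GC])

instance (a b : ℕ) : Decidable (R a b) :=
  inferInstanceAs (Decidable (a ≤ b + 2 ∧ b ≤ a + 2))

lemma inv_base : CIv 0 := by
  refine ⟨by decide, by decide, by decide, ⟨[[1,1,1],[1,1,0]], by decide⟩, ?_,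
    by decide, by decide,
    by show List.IsChain R [3,2,1,3,2,3]; simp [List.isChain_cons_cons, R], ⟨[3], by decide⟩⟩
  intro x
  constructor
  · intro hx
    fin_cases hx <;> exact ⟨rfl, by decide⟩
  · rintro ⟨hlen, hne⟩
    rcases x with _ | ⟨a, _ | ⟨b, _ | ⟨c, _ | ⟨d, t⟩⟩⟩⟩ <;> simp at hlen
    rcases zmod2_cases a with rfl | rfl <;> rcases zmod2_cases b with rfl | rfl <;>
      rcases zmod2_cases c with rfl | rfl <;>
      first
        | decide
        | exact (hne (by decide)).elim

lemma concat_ne {x y : ZMod 2} (h : x ≠ y) (a b : List (ZMod 2)) :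
    a ++ [x] ≠ b ++ [y] := by
  intro e
  apply h
  have := congrArg (fun l => List.getLastD l 0) e
  simpa [getLastD_concat] using this

lemma Z4_split (k : ℕ) : Z (k+4) = Z (k+1) ++ [0,0,0] := by
  have := Z_append (k+1) 3
  simpa [Z] using this

lemma bf_of_inv {k : ℕ} (ih : CIv k) : CBf k := by
  obtain ⟨core, hA⟩ := ih.shapeA
  obtain ⟨mid, hD⟩ := ih.shapeD
  have hB : c2B (k+4) = Z (k+4) ::
      ((c2A (k+3)).map (· ++ [1]) ++ (c2A (k+3)).tail.reverse.map (· ++ [0])) := rfl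
  have hdB : dB (k+4) = (k+4) :: dA (k+3) ++ (k+4) :: (dA (k+3)).tail.reverse := rfl
  have h8 : (8:ℕ) ≤ 2^(k+3) := by
    calc (8:ℕ) = 2^3 := by norm_num
    _ ≤ 2^(k+3) := Nat.pow_le_pow_right (by omega) (by omega)
  have hpow : (2:ℕ)^(k+4) = 2^(k+3) * 2 := pow_succ 2 (k+3)
  -- the missing vector of A
  have hmissA : ∀ a ∈ c2A (k+3), a ≠ Z (k+1) ++ [1,0] := fun a ha => ((ih.mem a).1 ha).2
  have htailA : (c2A (k+3)).tail = (Z (k+2) ++ [1]) :: (Z (k+1) ++ [1,1]) ::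
      core ++ [Z k ++ [1,0,0], Z k ++ [1,0,1]] := by rw [hA]; rfl
  -- shapeB
  have shB : ∃ V, c2B (k+4) = Z (k+4) :: (Z (k+3) ++ [1]) :: (Z (k+2) ++ [1,1]) ::
      V ++ [Z (k+1) ++ [1,1,0], Z (k+2) ++ [1,0]] := by
    refine ⟨((Z (k+1) ++ [1,1]) ++ [1]) :: (core.map (· ++ [1]) ++
      [(Z k ++ [1,0,0]) ++ [1], (Z k ++ [1,0,1]) ++ [1]]) ++
      ((Z k ++ [1,0,1]) ++ [0]) :: ((Z k ++ [1,0,0]) ++ [0]) ::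
      core.reverse.map (· ++ [0]), ?_⟩
    rw [hB, hA]
    simp [List.reverse_append]
  -- shapeDB
  have shDB : ∃ W, dB (k+4) = (k+4) :: (k+3) :: (k+2) :: W ++ [k+1, k+2] := by
    refine ⟨(k+1) :: mid ++ [k+2, k+3] ++ (k+4) :: (k+3) :: (k+2) :: mid.reverse, ?_⟩
    rw [hdB, hD]
    simp [List.reverse_append]
  -- lengths
  have hlenB : (c2B (k+4)).length = 2^(k+4) - 2 := by
    rw [hB]
    simp [List.length_tail, ih.len]
    omega
  have hlendB : (dB (k+4)).length = 2^(k+4) - 3 := by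
    rw [hdB]
    simp [List.length_tail, ih.dlen]
    omega
  -- membership
  have hmem : ∀ x : List (ZMod 2), x ∈ c2B (k+4) ↔
      x.length = k+4 ∧ x ≠ Z (k+1) ++ [1,0,0] ∧ x ≠ Z (k+1) ++ [1,0,1] := by
    intro x
    have hu1 : Z (k+1) ++ [1,0,0] = (Z (k+1) ++ [1,0]) ++ [0] := by simp
    have hu2 : Z (k+1) ++ [1,0,1] = (Z (k+1) ++ [1,0]) ++ [1] := by simp
    rw [hB]
    simp only [List.mem_cons, List.mem_append, List.mem_map, List.mem_reverse]
    constructor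
    · rintro (rfl | ⟨a, ha, rfl⟩ | ⟨a, ha, rfl⟩)
      · refine ⟨by simp [Z_length], ?_, ?_⟩
        · rw [Z4_split]
          intro h
          exact absurd (List.append_cancel_left h) (by decide)
        · rw [Z4_split]
          intro h
          exact absurd (List.append_cancel_left h) (by decide)
      · refine ⟨by simp [ih.len_mem a ha], ?_, ?_⟩
        · rw [hu1]; exact concat_ne (by decide) _ _
        · rw [hu2]
          intro h
          exact hmissA a ha (List.append_cancel_right h)
      · have haA : a ∈ c2A (k+3) := List.mem_of_mem_tail ha
        refine ⟨by simp [ih.len_mem a haA], ?_, ?_⟩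
        · rw [hu1]
          intro h
          exact hmissA a haA (List.append_cancel_right h)
        · rw [hu2]; exact concat_ne (by decide) _ _
    · rintro ⟨hlen, hne1, hne2⟩
      have hxne : x ≠ [] := by
        intro h; rw [h] at hlen; simp at hlen
      obtain ⟨y, b, rfl⟩ : ∃ y b, x = y ++ [b] :=
        ⟨x.dropLast, x.getLast hxne, (List.dropLast_append_getLast hxne).symm⟩
      have hylen : y.length = k+3 := by
        rw [List.length_append] at hlen
        simpa using hlen
      rcases zmod2_cases b with rfl | rfl
      · by_cases hy : y = Z (k+3)
        · left
          rw [hy, ← Z_succ']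
        · right; right
          refine ⟨y, ?_, rfl⟩
          have hyA : y ∈ c2A (k+3) := by
            refine (ih.mem y).2 ⟨hylen, ?_⟩
            intro h
            exact hne1 (by rw [h, hu1])
          rw [hA] at hyA
          rcases List.mem_cons.1 hyA with h | h
          · exact absurd h hy
          · rw [htailA]; exact h
      · right; left
        refine ⟨y, ?_, rfl⟩
        refine (ih.mem y).2 ⟨hylen, ?_⟩
        intro h
        exact hne2 (by rw [h, hu2])
  -- nodup
  have hnodup : (c2B (k+4)).Nodup := by
    rw [hB]
    rw [List.nodup_cons, List.nodup_append]
    refine ⟨?_, ?_, ?_, ?_⟩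
    · simp only [List.mem_append, List.mem_map, List.mem_reverse]
      rintro (⟨a, ha, h⟩ | ⟨a, ha, h⟩)
      · exact concat_ne (by decide : (1:ZMod 2) ≠ 0) a (Z (k+3)) (by rw [h, ← Z_succ'])
      · have : a = Z (k+3) := by
          apply List.append_cancel_right (bs := [(0:ZMod 2)])
          rw [h, ← Z_succ']
        subst this
        have hnd := ih.nodup
        rw [hA] at hnd
        rw [htailA] at ha
        exact (List.nodup_cons.1 hnd).1 ha
    · exact ih.nodup.map (List.append_left_injective [1])
    · exact (List.nodup_reverse.mpr ((List.tail_sublist _).nodup ih.nodup)).map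
        (List.append_left_injective [0])
    · intro x h1 y h2 hxy
      subst hxy
      simp only [List.mem_map, List.mem_reverse] at h1 h2
      obtain ⟨a, _, rfl⟩ := h1
      obtain ⟨b, _, hb⟩ := h2
      exact concat_ne (by decide : (0:ZMod 2) ≠ 1) b a hb
  -- Gray chain
  have g1 : GC ((c2A (k+3)).map (· ++ [1])) (dA (k+3)) := gc_map_append 1 ih.gc
  have g2 : GC ((c2A (k+3)).tail.reverse.map (· ++ [0])) ((dA (k+3)).tail.reverse) :=
    gc_map_append 0 (gc_reverse (gc_tail ih.gc))
  have hL1ne : (c2A (k+3)).map (· ++ [1]) ≠ [] := by rw [hA]; simp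
  have hL2ne : (c2A (k+3)).tail.reverse.map (· ++ [0]) ≠ [] := by rw [htailA]; simp
  have hA' : c2A (k+3) = (Z (k+3) :: (Z (k+2) ++ [1]) :: (Z (k+1) ++ [1,1]) ::
      core ++ [Z k ++ [1,0,0]]) ++ [Z k ++ [1,0,1]] := by rw [hA]; simp
  have hgc : GC (c2B (k+4)) (dB (k+4)) := by
    have h01 : GC ([Z (k+4)] ++ (c2A (k+3)).map (· ++ [1])) ([] ++ (k+4) :: dA (k+3)) := by
      apply gc_glue (show GC [Z (k+4)] [] from trivial) g1 (by simp) hL1ne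
      have h := transAt_mid (Z (k+3)) [] 0
      rw [Z_length] at h
      have hgl : (([Z (k+4)] : List (List (ZMod 2))).getLastD []) = Z (k+4) := by simp
      have hhd : (((c2A (k+3)).map (· ++ [1])).headD []) = Z (k+3) ++ [1] := by
        rw [hA]; simp
      rw [hgl, hhd]
      simpa [← Z_succ'] using h
    have h02 : GC (([Z (k+4)] ++ (c2A (k+3)).map (· ++ [1])) ++
        (c2A (k+3)).tail.reverse.map (· ++ [0]))
        (([] ++ (k+4) :: dA (k+3)) ++ (k+4) :: (dA (k+3)).tail.reverse) := by
      apply gc_glue h01 g2 (by simp) hL2ne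
      have hgl : (([Z (k+4)] ++ (c2A (k+3)).map (· ++ [1])).getLastD []) =
          (Z k ++ [1,0,1]) ++ [1] := by
        rw [getLastD_append _ _ _ hL1ne]
        have e : (c2A (k+3)).map (· ++ [1]) =
            ((Z (k+3) :: (Z (k+2) ++ [1]) :: (Z (k+1) ++ [1,1]) :: core ++
              [Z k ++ [1,0,0]]).map (· ++ [1])) ++ [(Z k ++ [1,0,1]) ++ [1]] := by
          rw [hA']; simp
        rw [e, getLastD_concat]
      have hhd : (((c2A (k+3)).tail.reverse.map (· ++ [0])).headD []) =
          (Z k ++ [1,0,1]) ++ [0] := by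
        have : (c2A (k+3)).tail = ((Z (k+2) ++ [1]) :: (Z (k+1) ++ [1,1]) ::
            core ++ [Z k ++ [1,0,0]]) ++ [Z k ++ [1,0,1]] := by rw [htailA]; simp
        rw [this, List.reverse_concat]
        simp
      rw [hgl, hhd]
      have h := transAt_mid (Z k ++ [1,0,1]) [] 1
      have hlen : (Z k ++ [1,0,1]).length = k + 3 := by simp [Z_length]
      rw [hlen] at h
      have : ((1:ZMod 2)+1) = 0 := by decide
      rw [this] at h
      exact h
    have e1 : ([Z (k+4)] ++ (c2A (k+3)).map (· ++ [1])) ++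
        (c2A (k+3)).tail.reverse.map (· ++ [0]) = c2B (k+4) := by
      rw [hB]; simp
    have e2 : (([] ++ (k+4) :: dA (k+3)) ++ (k+4) :: (dA (k+3)).tail.reverse)
        = dB (k+4) := by rw [hdB]; simp
    rw [e1, e2] at h02
    exact h02
  -- chain
  have hchain : List.Chain' R (dB (k+4)) := by
    have hDne : dA (k+3) ≠ [] := by rw [hD]; simp
    have c3 : List.Chain' R ((dA (k+3)).tail.reverse) := by
      apply List.isChain_reverse.mpr
      exact (ih.chain.tail).imp (fun a b h => ⟨h.2, h.1⟩)
    have cinner : List.Chain' R ((k+4) :: (dA (k+3)).tail.reverse) := by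
      rw [show ((k+4) :: (dA (k+3)).tail.reverse) = [k+4] ++ (dA (k+3)).tail.reverse by simp]
      apply List.IsChain.append (List.isChain_singleton _) c3
      intro x hx y hy
      simp at hx
      subst hx
      have : (dA (k+3)).tail.reverse.head? = some (k+3) := by
        rw [List.head?_reverse]
        rw [hD, List.cons_append, List.tail_cons]
        have e : ((k+2) :: (k+1) :: mid ++ [k+2, k+3] : List ℕ) =
            ((k+2) :: (k+1) :: mid ++ [k+2]) ++ [k+3] := by simp
        rw [e, List.getLast?_concat]
      rw [this] at hy
      simp at hy
      subst hy
      exact ⟨by omega, by omega⟩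
    have cmid : List.Chain' R (dA (k+3) ++ (k+4) :: (dA (k+3)).tail.reverse) := by
      apply List.IsChain.append ih.chain cinner
      intro x hx y hy
      have : (dA (k+3)).getLast? = some (k+3) := by
        rw [hD]
        have : ((k+3) :: (k+2) :: (k+1) :: mid ++ [k+2, k+3] : List ℕ) =
            ((k+3) :: (k+2) :: (k+1) :: mid ++ [k+2]) ++ [k+3] := by simp
        rw [this, List.getLast?_concat]
      rw [this] at hx
      simp at hx hy
      subst hx; subst hy
      exact ⟨by omega, by omega⟩
    rw [hdB]
    rw [show ((k+4) :: dA (k+3) ++ (k+4) :: (dA (k+3)).tail.reverse : List ℕ) =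
        [k+4] ++ (dA (k+3) ++ (k+4) :: (dA (k+3)).tail.reverse) by simp]
    apply List.IsChain.append (List.isChain_singleton _) cmid
    intro x hx y hy
    simp at hx
    subst hx
    have : (dA (k+3) ++ (k+4) :: (dA (k+3)).tail.reverse).head? = some (k+3) := by
      rw [hD]; simp
    rw [this] at hy
    simp at hy
    subst hy
    exact ⟨by omega, by omega⟩
  -- wrap transition
  have hwrap : TransAt ((c2B (k+4)).getLastD []) ((c2B (k+4)).headD []) (k+3) := by
    obtain ⟨V, hV⟩ := shB
    have hgl : (c2B (k+4)).getLastD [] = Z (k+2) ++ [1,0] := by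
      rw [hV]
      have : (Z (k+4) :: (Z (k+3) ++ [1]) :: (Z (k+2) ++ [1,1]) ::
          V ++ [Z (k+1) ++ [1,1,0], Z (k+2) ++ [1,0]] : List (List (ZMod 2))) =
          (Z (k+4) :: (Z (k+3) ++ [1]) :: (Z (k+2) ++ [1,1]) ::
          V ++ [Z (k+1) ++ [1,1,0]]) ++ [Z (k+2) ++ [1,0]] := by simp
      rw [this, getLastD_concat]
    have hhd : (c2B (k+4)).headD [] = Z (k+4) := by rw [hV]; simp
    rw [hgl, hhd]
    have h := transAt_mid (Z (k+2)) [0] 1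
    have hlen : (Z (k+2)).length = k + 2 := Z_length _
    rw [hlen] at h
    have e1 : (Z (k+2) ++ (1:ZMod 2) :: [0]) = Z (k+2) ++ [1,0] := rfl
    have e2 : (Z (k+2) ++ ((1:ZMod 2)+1) :: [0]) = Z (k+4) := by
      have h0 : ((1:ZMod 2)+1) = 0 := by decide
      rw [h0]
      have hz2 : Z 2 = ([0,0] : List (ZMod 2)) := rfl
      have hz : Z (k+4) = Z (k+2) ++ [0,0] := by rw [← hz2, ← Z_append]
      rw [hz]
    rw [e1, e2] at h
    exact h
  exact ⟨by
      intro c hc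
      rw [hB] at hc
      rcases List.mem_cons.1 hc with rfl | hc'
      · simp [Z_length]
      · rcases List.mem_append.1 hc' with h | h
        · obtain ⟨a, ha, rfl⟩ := List.mem_map.1 h
          simp [ih.len_mem a ha]
        · obtain ⟨a, ha, rfl⟩ := List.mem_map.1 h
          have : a ∈ c2A (k+3) := List.mem_of_mem_tail (List.mem_reverse.1 ha)
          simp [ih.len_mem a this],
    hlenB, hlendB, hmem, hnodup, hgc, hchain, hwrap, shB, shDB⟩

lemma inv_step {k : ℕ} (hb : CBf k) : CIv (k+1) := by
  obtain ⟨V, hV⟩ := hb.shapeB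
  obtain ⟨W, hW⟩ := hb.shapeDB
  have h16 : (16:ℕ) ≤ 2^(k+4) := by
    calc (16:ℕ) = 2^4 := by norm_num
    _ ≤ 2^(k+4) := Nat.pow_le_pow_right (by omega) (by omega)
  have hAeq : c2A (k+4) = (c2B (k+4)).dropLast ++
      [Z (k+1) ++ [1,0,0], Z (k+1) ++ [1,0,1]] := by
    have : c2A (k+4) = (c2B (k+4)).dropLast ++
        [unit (k+4) (k+2), vadd (unit (k+4) (k+2)) (unit (k+4) (k+4))] := rfl
    rw [this, vadd_units, unit_sub2]
  have hdAeq : dA (k+4) = (dB (k+4)).dropLast ++ [k+3, k+4] := rfl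
  have hBD : (c2B (k+4)).dropLast = Z (k+4) :: (Z (k+3) ++ [1]) ::
      (Z (k+2) ++ [1,1]) :: V ++ [Z (k+1) ++ [1,1,0]] := by
    rw [hV]
    have e : (Z (k+4) :: (Z (k+3) ++ [1]) :: (Z (k+2) ++ [1,1]) ::
        V ++ [Z (k+1) ++ [1,1,0], Z (k+2) ++ [1,0]] : List (List (ZMod 2))) =
        (Z (k+4) :: (Z (k+3) ++ [1]) :: (Z (k+2) ++ [1,1]) ::
        V ++ [Z (k+1) ++ [1,1,0]]) ++ [Z (k+2) ++ [1,0]] := by simp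
    rw [e, List.dropLast_concat]
  have hdBD : (dB (k+4)).dropLast = (k+4) :: (k+3) :: (k+2) :: W ++ [k+1] := by
    rw [hW]
    have e : ((k+4) :: (k+3) :: (k+2) :: W ++ [k+1, k+2] : List ℕ) =
        ((k+4) :: (k+3) :: (k+2) :: W ++ [k+1]) ++ [k+2] := by simp
    rw [e, List.dropLast_concat]
  have hBfull : c2B (k+4) = (c2B (k+4)).dropLast ++ [Z (k+2) ++ [1,0]] := by
    rw [hBD, hV]; simp
  have hdBfull : dB (k+4) = (dB (k+4)).dropLast ++ [k+2] := by
    rw [hdBD, hW]; simp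
  have hv : (Z (k+2) ++ [1,0] : List (ZMod 2)) = Z (k+1) ++ [0,1,0] := by
    rw [Z_succ']; simp
  have hu1v : (Z (k+1) ++ [1,0,0] : List (ZMod 2)) ≠ Z (k+2) ++ [1,0] := by
    rw [hv]; intro h; exact absurd (List.append_cancel_left h) (by decide)
  have hu2v : (Z (k+1) ++ [1,0,1] : List (ZMod 2)) ≠ Z (k+2) ++ [1,0] := by
    rw [hv]; intro h; exact absurd (List.append_cancel_left h) (by decide)
  have hu12 : (Z (k+1) ++ [1,0,0] : List (ZMod 2)) ≠ Z (k+1) ++ [1,0,1] := by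
    intro h; exact absurd (List.append_cancel_left h) (by decide)
  have hu1B : (Z (k+1) ++ [1,0,0] : List (ZMod 2)) ∉ c2B (k+4) :=
    fun h => ((hb.mem _).1 h).2.1 rfl
  have hu2B : (Z (k+1) ++ [1,0,1] : List (ZMod 2)) ∉ c2B (k+4) :=
    fun h => ((hb.mem _).1 h).2.2 rfl
  have hmd : ∀ y : List (ZMod 2), y ∈ (c2B (k+4)).dropLast ↔
      y ∈ c2B (k+4) ∧ y ≠ Z (k+2) ++ [1,0] := by
    intro y
    have hnd := hb.nodup
    rw [hBfull] at hnd
    have := mem_concat_nodup hnd y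
    rw [← hBfull] at this
    exact this
  have hsub : (c2B (k+4)).dropLast ⊆ c2B (k+4) := (List.dropLast_sublist _).subset
  refine ⟨?_, ?_, ?_, ?_, ?_, ?_, ?_, ?_, ?_⟩
  · show ∀ c ∈ c2A (k+4), c.length = k+4
    intro c hc
    rw [hAeq] at hc
    rcases List.mem_append.1 hc with h | h
    · exact hb.len_mem c (hsub h)
    · simp only [List.mem_cons, List.not_mem_nil, or_false] at h
      rcases h with rfl | rfl <;> simp [Z_length]
  · show (c2A (k+4)).length = 2^(k+4) - 1
    rw [hAeq]
    rw [List.length_append, List.length_dropLast, hb.len]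
    simp
    omega
  · show (dA (k+4)).length = 2^(k+4) - 2
    rw [hdAeq]
    rw [List.length_append, List.length_dropLast, hb.dlen]
    simp
    omega
  · show ∃ core, c2A (k+4) = Z (k+4) :: (Z (k+3) ++ [1]) :: (Z (k+2) ++ [1,1]) ::
        core ++ [Z (k+1) ++ [1,0,0], Z (k+1) ++ [1,0,1]]
    refine ⟨V ++ [Z (k+1) ++ [1,1,0]], ?_⟩
    rw [hAeq, hBD]
    simp
  · show ∀ x : List (ZMod 2), x ∈ c2A (k+4) ↔ x.length = k+4 ∧ x ≠ Z (k+2) ++ [1,0]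
    intro x
    rw [hAeq]
    constructor
    · intro hx
      rcases List.mem_append.1 hx with h | h
      · exact ⟨hb.len_mem x (hsub h), ((hmd x).1 h).2⟩
      · simp only [List.mem_cons, List.not_mem_nil, or_false] at h
        rcases h with rfl | rfl
        · exact ⟨by simp [Z_length], hu1v⟩
        · exact ⟨by simp [Z_length], hu2v⟩
    · rintro ⟨hlen, hnev⟩
      by_cases h1 : x = Z (k+1) ++ [1,0,0]
      · subst h1; simp
      · by_cases h2 : x = Z (k+1) ++ [1,0,1]
        · subst h2; simp
        · apply List.mem_append_left
          exact (hmd x).2 ⟨(hb.mem x).2 ⟨hlen, h1, h2⟩, hnev⟩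
  · show (c2A (k+4)).Nodup
    rw [hAeq]
    rw [List.nodup_append]
    refine ⟨?_, ?_, ?_⟩
    · have := hb.nodup
      rw [hBfull] at this
      exact this.of_append_left
    · simp [hu12]
    · intro x h1 y h2 hxy
      subst hxy
      simp only [List.mem_cons, List.not_mem_nil, or_false] at h2
      rcases h2 with rfl | rfl
      · exact hu1B (hsub h1)
      · exact hu2B (hsub h1)
  · show GC (c2A (k+4)) (dA (k+4))
    have gP : GC ((c2B (k+4)).dropLast) ((dB (k+4)).dropLast) := gc_dropLast hb.gc
    have tr12 : TransAt (Z (k+1) ++ [1,0,0]) (Z (k+1) ++ [1,0,1]) (k+4) := by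
      have h := transAt_mid (Z (k+1) ++ [1,0]) [] 0
      have hl : (Z (k+1) ++ [1,0] : List (ZMod 2)).length = k+3 := by simp [Z_length]
      rw [hl] at h
      have e1 : (Z (k+1) ++ [1,0]) ++ [(0:ZMod 2)] = Z (k+1) ++ [1,0,0] := by simp
      have e2 : (Z (k+1) ++ [1,0]) ++ [(0:ZMod 2)+1] = Z (k+1) ++ [1,0,1] := by
        norm_num
      rw [e1, e2] at h
      exact h
    have gU : GC [Z (k+1) ++ [1,0,0], Z (k+1) ++ [1,0,1]] [k+4] := ⟨tr12, trivial⟩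
    have hPne : (c2B (k+4)).dropLast ≠ [] := by rw [hBD]; simp
    have htr : TransAt (((c2B (k+4)).dropLast).getLastD [])
        (([Z (k+1) ++ [1,0,0], Z (k+1) ++ [1,0,1]] :
          List (List (ZMod 2))).headD []) (k+3) := by
      have hgl : ((c2B (k+4)).dropLast).getLastD [] = Z (k+1) ++ [1,1,0] := by
        rw [hBD]
        have e : (Z (k+4) :: (Z (k+3) ++ [1]) :: (Z (k+2) ++ [1,1]) ::
            V ++ [Z (k+1) ++ [1,1,0]] : List (List (ZMod 2))) =
            (Z (k+4) :: (Z (k+3) ++ [1]) :: (Z (k+2) ++ [1,1]) :: V) ++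
            [Z (k+1) ++ [1,1,0]] := by simp
        rw [e, getLastD_concat]
      rw [hgl]
      have hhd : (([Z (k+1) ++ [1,0,0], Z (k+1) ++ [1,0,1]] :
          List (List (ZMod 2))).headD []) = Z (k+1) ++ [1,0,0] := rfl
      rw [hhd]
      have h := transAt_mid (Z (k+1) ++ [1]) [0] 1
      have hl : (Z (k+1) ++ [1] : List (ZMod 2)).length = k+2 := by simp [Z_length]
      rw [hl] at h
      have e1 : (Z (k+1) ++ [1]) ++ (1:ZMod 2) :: [0] = Z (k+1) ++ [1,1,0] := by simp
      have e2 : (Z (k+1) ++ [1]) ++ ((1:ZMod 2)+1) :: [0] = Z (k+1) ++ [1,0,0] := by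
        have h0 : ((1:ZMod 2)+1) = 0 := by decide
        rw [h0]; simp
      rw [e1, e2] at h
      exact h
    have hglue := gc_glue gP gU hPne (by simp) htr
    rw [← hAeq] at hglue
    rw [hdAeq]
    exact hglue
  · show List.Chain' R (dA (k+4))
    have hc : List.IsChain R (dB (k+4)) := hb.chain
    rw [hdBfull, List.isChain_append] at hc
    obtain ⟨c1, _, _⟩ := hc
    show List.IsChain R (dA (k+4))
    rw [hdAeq, List.isChain_append]
    refine ⟨c1, ?_, ?_⟩
    · refine List.isChain_cons_cons.2 ⟨⟨by omega, by omega⟩, List.isChain_singleton _⟩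
    · intro x hx y hy
      rw [hdBD] at hx
      have e : ((k+4) :: (k+3) :: (k+2) :: W ++ [k+1] : List ℕ) =
          ((k+4) :: (k+3) :: (k+2) :: W) ++ [k+1] := by simp
      rw [e, List.getLast?_concat] at hx
      simp at hx hy
      subst hx; subst hy
      exact ⟨by omega, by omega⟩
  · show ∃ mid, dA (k+4) = (k+4) :: (k+3) :: (k+2) :: mid ++ [k+3, k+4]
    refine ⟨W ++ [k+1], ?_⟩
    rw [hdAeq, hdBD]
    simp

lemma inv_all : ∀ k, CIv k
  | 0 => inv_base
  | (k+1) => inv_step (bf_of_inv (inv_all k))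

theorem stmt5 : ∀ n : ℕ, 4 ≤ n →
    (∀ c ∈ c2B n, c.length = n) ∧ (c2B n).length = 2 ^ n - 2 ∧
    (∀ c : List (ZMod 2), c.length = n →
      (c ∉ c2B n ↔ c = unit n (n-2) ∨ c = vadd (unit n (n-2)) (unit n n))) ∧
    ∃ δ : ℕ → ℕ, CyclicGrayWith (c2B n) δ ∧ SkewCyc (c2B n).length δ 2 := by
  intro n hn
  obtain ⟨k, rfl⟩ : ∃ k, n = k + 4 := ⟨n - 4, by omega⟩
  have hb := bf_of_inv (inv_all k)
  have hu1 : unit (k+4) (k+4-2) = Z (k+1) ++ [1,0,0] := by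
    have : k + 4 - 2 = k + 2 := by omega
    rw [this, unit_sub2]
  have hu2 : vadd (unit (k+4) (k+4-2)) (unit (k+4) (k+4)) = Z (k+1) ++ [1,0,1] := by
    have : k + 4 - 2 = k + 2 := by omega
    rw [this, vadd_units]
  refine ⟨hb.len_mem, hb.len, ?_, ?_⟩
  · intro c hc
    rw [hu2, hu1]
    constructor
    · intro hnotin
      by_contra hcon
      push_neg at hcon
      exact hnotin ((hb.mem c).2 ⟨hc, hcon.1, hcon.2⟩)
    · rintro (rfl | rfl) hmem
      · exact ((hb.mem _).1 hmem).2.1 rfl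
      · exact ((hb.mem _).1 hmem).2.2 rfl
  · obtain ⟨W, hW⟩ := hb.shapeDB
    have h24 : (2:ℕ) ^ 4 ≤ 2 ^ (k+4) := Nat.pow_le_pow_right (by omega) (by omega)
    have hBne : c2B (k+4) ≠ [] := by
      apply List.ne_nil_of_length_pos
      rw [hb.len]
      omega
    refine ⟨fun i => (dB (k+4) ++ [k+3]).getD i 0, ?_, ?_⟩
    · exact toCyclic hb.gc hb.nodup hBne hb.wrapT
    · apply toSkewCyc
      · show List.IsChain R _
        rw [List.isChain_append]
        refine ⟨hb.chain, List.isChain_singleton _, ?_⟩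
        intro x hx y hy
        have hlast : (dB (k+4)).getLast? = some (k+2) := by
          rw [hW]
          have h1 : (k+4) :: (k+3) :: (k+2) :: W ++ [k+1, k+2]
              = ((k+4) :: (k+3) :: (k+2) :: W ++ [k+1]) ++ [k+2] := by simp
          rw [h1, List.getLast?_concat]
        rw [hlast] at hx
        simp at hx hy
        subst hx; subst hy
        exact ⟨by omega, by omega⟩
      · simp
      · rw [hW]
        have : ((k+4) :: (k+3) :: (k+2) :: W ++ [k+1, k+2] ++ [k+3]).getLastD 0 = k+3 := by
          rw [getLastD_concat]
        rw [this]
        refine ⟨?_, ?_⟩ <;> simp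
      · have h1 := hb.dlen
        have h2 := hb.len
        simp only [List.length_append, List.length_cons, List.length_nil]
        omega
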